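/- Fix μ, r ∈ ℝ, σ > 0, γ > 0 with γ ≠ 1, λ > 0, T > 0, ψ, θ ∈ ℝ, an integer K ≥ 1, and set Δt = T/K. Let a₀, …, a_{K−1} be i.i.d. Gaussian random variables with mean θ and variance λ/(γσ²), and let ΔB₀, …, ΔB_{K−1} be i.i.d. Gaussian with mean 0 and variance Δt, all 2K variables mutually independent. Define, for each k, R_k = exp( (r + (μ−r)a_k − (1/2)σ²a_k²)Δt + σ a_k ΔB_k ) and ê(ψ,θ) = Σ_{k=0}^{K−1} [γσ²(a_k − θ)/(λ(1−γ))] · ( R_k^{1−γ} · exp((−ψ + λ(1−γ)/2)Δt) − 1 ). Set A₁ = (1−γ)(r + (μ−r)θ − (γ/2)σ²θ² + λ/2) − ψ, A₂ = (1−γ)(μ − r − θγσ²)·√(λ/(γσ²)), and A₃ = (γ−1)λ. If 1 − A₃Δt > 0, then E[ê(ψ,θ)] = T(μ − r − θγσ²) · exp( A₁Δt + A₂²Δt² / (2(1 − A₃Δt)) ) · (1 − A₃Δt)^{−3/2}. -/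

import Mathlib

open MeasureTheory ProbabilityTheory Real

open scoped ENNReal NNReal

namespace Stmt13Aux



lemma exp_quad_shift (p q : ℝ) (hp : p ≠ 0) (x : ℝ) :
    Real.exp (q^2/(4*p)) * Real.exp (-p * (x - q/(2*p))^2) = Real.exp (-p * x^2 + q * x) := by
  rw [← Real.exp_add]; congr 1; field_simp; ring

lemma integrable_exp_quad (p q : ℝ) (hp : 0 < p) :
    Integrable (fun x : ℝ => Real.exp (-p * x^2 + q * x)) := by
  have h := ((integrable_exp_neg_mul_sq hp).comp_sub_right (q/(2*p))).const_mul
      (Real.exp (q^2/(4*p)))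
  exact h.congr (Filter.Eventually.of_forall fun x => exp_quad_shift p q hp.ne' x)

lemma integrable_mul_exp_quad (p q : ℝ) (hp : 0 < p) :
    Integrable (fun x : ℝ => x * Real.exp (-p * x^2 + q * x)) := by
  have hbase : Integrable (fun y : ℝ => (y + q/(2*p)) * Real.exp (-p * y^2)) := by
    have := (integrable_mul_exp_neg_mul_sq hp).add ((integrable_exp_neg_mul_sq hp).const_mul (q/(2*p)))
    refine this.congr (Filter.Eventually.of_forall fun y => ?_)
    simp only [Pi.add_apply]; ring
  have h := (hbase.comp_sub_right (q/(2*p))).const_mul (Real.exp (q^2/(4*p)))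
  refine h.congr (Filter.Eventually.of_forall fun x => ?_)
  simp only [sub_add_cancel]
  calc Real.exp (q^2/(4*p)) * (x * Real.exp (-p * (x - q/(2*p))^2))
      = x * (Real.exp (q^2/(4*p)) * Real.exp (-p * (x - q/(2*p))^2)) := by ring
    _ = x * Real.exp (-p * x^2 + q * x) := by rw [exp_quad_shift p q hp.ne']

lemma integral_exp_quad (p q : ℝ) (hp : 0 < p) :
    ∫ x : ℝ, Real.exp (-p * x^2 + q * x)
      = Real.sqrt (π / p) * Real.exp (q^2/(4*p)) := by
  calc ∫ x : ℝ, Real.exp (-p * x^2 + q * x)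
      = ∫ x : ℝ, Real.exp (q^2/(4*p)) * Real.exp (-p * (x - q/(2*p))^2) := by
        refine integral_congr_ae (Filter.Eventually.of_forall fun x => ?_)
        simp only []
        rw [exp_quad_shift p q hp.ne']
    _ = Real.exp (q^2/(4*p)) * ∫ x : ℝ, Real.exp (-p * (x - q/(2*p))^2) :=
        integral_const_mul _ _
    _ = Real.exp (q^2/(4*p)) * ∫ x : ℝ, Real.exp (-p * x^2) :=
        by rw [integral_sub_right_eq_self (fun x => Real.exp (-p * x^2)) (q/(2*p))]
    _ = Real.sqrt (π / p) * Real.exp (q^2/(4*p)) := by rw [integral_gaussian]; ring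

lemma integral_mul_exp_neg_sq_zero (p : ℝ) :
    ∫ x : ℝ, x * Real.exp (-p * x^2) = 0 := by
  have h := integral_neg_eq_self (fun x : ℝ => x * Real.exp (-p * x^2)) volume
  simp only [neg_mul, neg_sq] at h
  have h2 : ∫ x : ℝ, -(x * Real.exp (-p * x^2)) = ∫ x : ℝ, x * Real.exp (-p * x^2) := by
    simpa using h
  rw [integral_neg] at h2
  linarith

lemma integral_mul_exp_quad (p q : ℝ) (hp : 0 < p) :
    ∫ x : ℝ, x * Real.exp (-p * x^2 + q * x)
      = (q/(2*p)) * Real.sqrt (π / p) * Real.exp (q^2/(4*p)) := by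
  have key : ∀ x : ℝ, x * Real.exp (-p * x^2 + q * x)
      = Real.exp (q^2/(4*p)) * (((x - q/(2*p)) + q/(2*p)) * Real.exp (-p * (x - q/(2*p))^2)) := by
    intro x
    rw [sub_add_cancel]
    rw [show Real.exp (q^2/(4*p)) * (x * Real.exp (-p * (x - q/(2*p))^2))
        = x * (Real.exp (q^2/(4*p)) * Real.exp (-p * (x - q/(2*p))^2)) by ring,
      exp_quad_shift p q hp.ne']
  calc ∫ x : ℝ, x * Real.exp (-p * x^2 + q * x)
      = ∫ x : ℝ, Real.exp (q^2/(4*p)) *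
          (((x - q/(2*p)) + q/(2*p)) * Real.exp (-p * (x - q/(2*p))^2)) :=
        integral_congr_ae (Filter.Eventually.of_forall key)
    _ = Real.exp (q^2/(4*p)) * ∫ x : ℝ,
          ((x - q/(2*p)) + q/(2*p)) * Real.exp (-p * (x - q/(2*p))^2) := integral_const_mul _ _
    _ = Real.exp (q^2/(4*p)) * ∫ y : ℝ, (y + q/(2*p)) * Real.exp (-p * y^2) := by
        rw [integral_sub_right_eq_self (fun y => (y + q/(2*p)) * Real.exp (-p * y^2)) (q/(2*p))]
    _ = (q/(2*p)) * Real.sqrt (π / p) * Real.exp (q^2/(4*p)) := by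
        have : ∫ y : ℝ, (y + q/(2*p)) * Real.exp (-p * y^2)
            = (∫ y : ℝ, y * Real.exp (-p * y^2)) + (q/(2*p)) * ∫ y : ℝ, Real.exp (-p * y^2) := by
          rw [← integral_const_mul]
          rw [← integral_add (integrable_mul_exp_neg_mul_sq hp)
            ((integrable_exp_neg_mul_sq hp).const_mul _)]
          refine integral_congr_ae (Filter.Eventually.of_forall fun y => ?_); ring
        rw [this, integral_mul_exp_neg_sq_zero, integral_gaussian]; ring



variable {m v α β : ℝ}

lemma toNNReal_ne_zero (hv : 0 < v) : v.toNNReal ≠ 0 := by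
  simp [Real.toNNReal_eq_zero, not_le, hv]

lemma pdf_eq (hv : 0 < v) (x : ℝ) :
    gaussianPDFReal m v.toNNReal x
      = (Real.sqrt (2 * π * v))⁻¹ * Real.exp (-(x - m)^2 / (2 * v)) := by
  rw [gaussianPDFReal]
  rw [Real.coe_toNNReal _ hv.le]

lemma integral_gaussianReal_eq (hv : 0 < v) (f : ℝ → ℝ) :
    ∫ x, f x ∂(gaussianReal m v.toNNReal)
      = ∫ x, gaussianPDFReal m v.toNNReal x * f x := by
  rw [gaussianReal_of_var_ne_zero m (toNNReal_ne_zero hv)]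
  have h : volume.withDensity (gaussianPDF m v.toNNReal)
      = volume.withDensity (fun x => ((gaussianPDFReal m v.toNNReal x).toNNReal : ℝ≥0∞)) := rfl
  rw [h, integral_withDensity_eq_integral_smul
    ((measurable_gaussianPDFReal m v.toNNReal).real_toNNReal) f]
  refine integral_congr_ae (Filter.Eventually.of_forall fun x => ?_)
  simp [NNReal.smul_def, Real.coe_toNNReal _ (gaussianPDFReal_nonneg m v.toNNReal x)]

lemma integrable_gaussianReal_iff (hv : 0 < v) {f : ℝ → ℝ} :
    Integrable f (gaussianReal m v.toNNReal)
      ↔ Integrable (fun x => f x * gaussianPDFReal m v.toNNReal x) volume := by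
  rw [gaussianReal_of_var_ne_zero m (toNNReal_ne_zero hv)]
  rw [integrable_withDensity_iff (measurable_gaussianPDF m v.toNNReal)
    (Filter.Eventually.of_forall fun x => ENNReal.ofReal_lt_top)]
  refine integrable_congr (Filter.Eventually.of_forall fun x => ?_)
  simp only [gaussianPDF]
  rw [ENNReal.toReal_ofReal (gaussianPDFReal_nonneg m v.toNNReal x)]


-- (assume s1, s2 contents available; for testing paste minimal decls)
variable {m v α β : ℝ}

lemma pdf_mul_exp (hv : 0 < v) (x : ℝ) :
    gaussianPDFReal m v.toNNReal x * Real.exp (α*x^2 + β*x)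
      = ((Real.sqrt (2 * π * v))⁻¹ * Real.exp (-(m^2/(2*v)))) *
        Real.exp (-((1-2*α*v)/(2*v)) * x^2 + (β + m/v) * x) := by
  rw [pdf_eq hv, mul_assoc, ← Real.exp_add]
  conv_rhs => rw [mul_assoc, ← Real.exp_add]
  congr 1
  field_simp
  ring

lemma gauss_integrable_exp (hv : 0 < v) (h : 2*α*v < 1) :
    Integrable (fun x => Real.exp (α*x^2 + β*x)) (gaussianReal m v.toNNReal) := by
  have hp : 0 < (1-2*α*v)/(2*v) := div_pos (by linarith) (by linarith)
  rw [integrable_gaussianReal_iff hv]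
  have hInt := (integrable_exp_quad _ (β + m/v) hp).const_mul
      ((Real.sqrt (2 * π * v))⁻¹ * Real.exp (-(m^2/(2*v))))
  refine hInt.congr (Filter.Eventually.of_forall fun x => ?_)
  simp only []
  rw [mul_comm (Real.exp (α*x^2 + β*x)) (gaussianPDFReal m v.toNNReal x), pdf_mul_exp hv]

lemma gauss_integrable_sub_mul_exp (hv : 0 < v) (h : 2*α*v < 1) (c : ℝ) :
    Integrable (fun x => (x - c) * Real.exp (α*x^2 + β*x)) (gaussianReal m v.toNNReal) := by
  have hp : 0 < (1-2*α*v)/(2*v) := div_pos (by linarith) (by linarith)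
  set C := (Real.sqrt (2 * π * v))⁻¹ * Real.exp (-(m^2/(2*v))) with hC
  rw [integrable_gaussianReal_iff hv]
  have hInt := ((integrable_mul_exp_quad _ (β + m/v) hp).const_mul C).sub
      ((integrable_exp_quad _ (β + m/v) hp).const_mul (C * c))
  refine hInt.congr (Filter.Eventually.of_forall fun x => ?_)
  have := pdf_mul_exp (m := m) (α := α) (β := β) hv x
  rw [← hC] at this
  calc C * (x * Real.exp (-((1-2*α*v)/(2*v)) * x^2 + (β + m/v) * x))
        - C * c * Real.exp (-((1-2*α*v)/(2*v)) * x^2 + (β + m/v) * x)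
      = (x - c) * (C * Real.exp (-((1-2*α*v)/(2*v)) * x^2 + (β + m/v) * x)) := by ring
    _ = (x - c) * Real.exp (α*x^2 + β*x) * gaussianPDFReal m v.toNNReal x := by
        rw [← this]; ring

lemma gauss_core (hv : 0 < v) (h : 2*α*v < 1) :
    (∫ x, Real.exp (α*x^2 + β*x) ∂(gaussianReal m v.toNNReal)
      = (Real.sqrt (1-2*α*v))⁻¹
        * Real.exp (α*m^2 + β*m + (β+2*α*m)^2*v/(2*(1-2*α*v))))
    ∧ (∫ x, (x - m) * Real.exp (α*x^2 + β*x) ∂(gaussianReal m v.toNNReal)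
      = (v*(β+2*α*m)/(1-2*α*v)) * (Real.sqrt (1-2*α*v))⁻¹
        * Real.exp (α*m^2 + β*m + (β+2*α*m)^2*v/(2*(1-2*α*v)))) := by
  have h1 : (0:ℝ) < 1-2*α*v := by linarith
  have hp : 0 < (1-2*α*v)/(2*v) := div_pos h1 (by linarith)
  set p := (1-2*α*v)/(2*v) with hpdef
  set q := β + m/v with hqdef
  set C := (Real.sqrt (2 * π * v))⁻¹ * Real.exp (-(m^2/(2*v))) with hC
  have halg1 : (Real.sqrt (2 * π * v))⁻¹ * Real.sqrt (π / p) = (Real.sqrt (1-2*α*v))⁻¹ := by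
    rw [inv_mul_eq_div, ← Real.sqrt_div (by positivity)]
    rw [show π / p / (2 * π * v) = (1-2*α*v)⁻¹ by
      rw [hpdef]; field_simp]
    rw [Real.sqrt_inv]
  have halg2 : Real.exp (-(m^2/(2*v))) * Real.exp (q^2/(4*p))
      = Real.exp (α*m^2 + β*m + (β+2*α*m)^2*v/(2*(1-2*α*v))) := by
    rw [← Real.exp_add]
    congr 1
    rw [hpdef, hqdef]
    have h1' : (1:ℝ) - 2*v*α ≠ 0 := by linarith
    have h1'' : (1:ℝ) - v*2*α ≠ 0 := by linarith
    field_simp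
    ring
  have hCsp : C * (Real.sqrt (π / p) * Real.exp (q^2/(4*p)))
      = (Real.sqrt (1-2*α*v))⁻¹
        * Real.exp (α*m^2 + β*m + (β+2*α*m)^2*v/(2*(1-2*α*v))) := by
    rw [hC, ← halg1, ← halg2]; ring
  constructor
  · rw [integral_gaussianReal_eq hv]
    calc ∫ x, gaussianPDFReal m v.toNNReal x * Real.exp (α*x^2 + β*x)
        = ∫ x, C * Real.exp (-p * x^2 + q * x) := by
          refine integral_congr_ae (Filter.Eventually.of_forall fun x => ?_)
          exact pdf_mul_exp hv x
      _ = C * ∫ x, Real.exp (-p * x^2 + q * x) := integral_const_mul _ _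
      _ = _ := by rw [integral_exp_quad _ _ hp, hCsp]
  · rw [integral_gaussianReal_eq hv]
    calc ∫ x, gaussianPDFReal m v.toNNReal x * ((x - m) * Real.exp (α*x^2 + β*x))
        = ∫ x, (C * (x * Real.exp (-p * x^2 + q * x)) - C * m * Real.exp (-p * x^2 + q * x)) := by
          refine integral_congr_ae (Filter.Eventually.of_forall fun x => ?_)
          have := pdf_mul_exp (m := m) (α := α) (β := β) hv x
          rw [← hC, ← hqdef] at this
          calc gaussianPDFReal m v.toNNReal x * ((x - m) * Real.exp (α*x^2 + β*x))
              = (x - m) * (gaussianPDFReal m v.toNNReal x * Real.exp (α*x^2 + β*x)) := by ring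
            _ = (x - m) * (C * Real.exp (-p * x^2 + q * x)) := by rw [this]
            _ = C * (x * Real.exp (-p * x^2 + q * x)) - C * m * Real.exp (-p * x^2 + q * x) := by
                ring
      _ = C * (∫ x, x * Real.exp (-p * x^2 + q * x))
            - C * m * (∫ x, Real.exp (-p * x^2 + q * x)) := by
          rw [integral_sub ((integrable_mul_exp_quad _ _ hp).const_mul C)
            ((integrable_exp_quad _ _ hp).const_mul (C * m)), integral_const_mul,
            integral_const_mul]
      _ = (q/(2*p) - m) * (C * (Real.sqrt (π / p) * Real.exp (q^2/(4*p)))) := by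
          rw [integral_mul_exp_quad _ _ hp, integral_exp_quad _ _ hp]; ring
      _ = _ := by
          rw [hCsp, show q/(2*p) - m = v*(β+2*α*m)/(1-2*α*v) by
            rw [hpdef, hqdef]; have h1' : (1:ℝ) - 2*v*α ≠ 0 := by linarith
            have h1'' : (1:ℝ) - v*2*α ≠ 0 := by linarith
            field_simp; ring]
          ring



/-- generic integrand -/
noncomputable def Faux (C t a₂ a₁ s a₀ : ℝ) (p : ℝ × ℝ) : ℝ :=
  C * (p.1 - t) * (Real.exp (a₂*p.1^2 + a₁*p.1 + s*p.1*p.2 + a₀) - 1)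

lemma Faux_continuous (C t a₂ a₁ s a₀ : ℝ) : Continuous (Faux C t a₂ a₁ s a₀) := by
  unfold Faux; fun_prop

lemma gauss_mgf {Δ : ℝ} (hΔ : 0 < Δ) (b : ℝ) :
    ∫ y, Real.exp (b*y) ∂(gaussianReal 0 Δ.toNNReal) = Real.exp (b^2*Δ/2) := by
  have h0 := (gauss_core (m := 0) (v := Δ) (α := 0) (β := b) hΔ (by norm_num)).1
  simpa using h0

lemma gauss_integrable_exp_lin {Δ : ℝ} (hΔ : 0 < Δ) (b : ℝ) :
    Integrable (fun y => Real.exp (b*y)) (gaussianReal 0 Δ.toNNReal) := by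
  have h0 := gauss_integrable_exp (m := 0) (v := Δ) (α := 0) (β := b) hΔ (by norm_num)
  simpa using h0

variable {C t a₂ a₁ s a₀ v Δ : ℝ}

lemma Faux_eq_line (x : ℝ) : (fun y => Faux C t a₂ a₁ s a₀ (x, y))
    = fun y => (C * (x - t) * Real.exp (a₂*x^2 + a₁*x + a₀)) * Real.exp ((s*x)*y)
      - C * (x - t) := by
  funext y
  simp only [Faux]
  rw [show a₂*x^2 + a₁*x + s*x*y + a₀ = (a₂*x^2 + a₁*x + a₀) + (s*x)*y by ring, Real.exp_add]
  ring

lemma Faux_line_integrable (hΔ : 0 < Δ) (x : ℝ) :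
    Integrable (fun y => Faux C t a₂ a₁ s a₀ (x, y)) (gaussianReal 0 Δ.toNNReal) := by
  rw [Faux_eq_line]
  exact ((gauss_integrable_exp_lin hΔ (s*x)).const_mul _).sub (integrable_const _)

lemma Faux_inner (hΔ : 0 < Δ) (x : ℝ) :
    ∫ y, Faux C t a₂ a₁ s a₀ (x, y) ∂(gaussianReal 0 Δ.toNNReal)
      = C * (x - t) * (Real.exp ((a₂ + s^2*Δ/2)*x^2 + a₁*x + a₀) - 1) := by
  rw [Faux_eq_line,
    integral_sub ((gauss_integrable_exp_lin hΔ (s*x)).const_mul _) (integrable_const _),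
    integral_const_mul, gauss_mgf hΔ]
  simp only [integral_const, probReal_univ, measure_univ, ENNReal.toReal_one, one_smul, smul_eq_mul, one_mul]
  have hexp : Real.exp (a₂*x^2 + a₁*x + a₀) * Real.exp ((s*x)^2*Δ/2)
      = Real.exp ((a₂ + s^2*Δ/2)*x^2 + a₁*x + a₀) := by
    rw [← Real.exp_add]; congr 1; ring
  linear_combination (C * (x - t)) * hexp

lemma Faux_norm_inner_le (hΔ : 0 < Δ) (x : ℝ) :
    (∫ y, ‖Faux C t a₂ a₁ s a₀ (x, y)‖ ∂(gaussianReal 0 Δ.toNNReal))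
      ≤ |C * (x - t)| * (Real.exp ((a₂ + s^2*Δ/2)*x^2 + a₁*x + a₀) + 1) := by
  set ν := gaussianReal 0 Δ.toNNReal
  have hb : Integrable (fun y => |C * (x - t)| *
      (Real.exp (a₂*x^2 + a₁*x + a₀) * Real.exp ((s*x)*y) + 1)) ν := by
    refine Integrable.const_mul ?_ _
    exact ((gauss_integrable_exp_lin hΔ (s*x)).const_mul _).add (integrable_const _)
  have hle : ∀ y, ‖Faux C t a₂ a₁ s a₀ (x, y)‖
      ≤ |C * (x - t)| * (Real.exp (a₂*x^2 + a₁*x + a₀) * Real.exp ((s*x)*y) + 1) := by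
    intro y
    have h1 : Faux C t a₂ a₁ s a₀ (x, y)
        = C * (x - t) * (Real.exp (a₂*x^2 + a₁*x + a₀) * Real.exp ((s*x)*y) - 1) := by
      have := congrFun (Faux_eq_line (C := C) (t := t) (a₂ := a₂) (a₁ := a₁) (s := s)
        (a₀ := a₀) x) y
      rw [this]; ring
    rw [h1, Real.norm_eq_abs, abs_mul]
    gcongr
    calc |Real.exp (a₂*x^2 + a₁*x + a₀) * Real.exp ((s*x)*y) - 1|
        ≤ |Real.exp (a₂*x^2 + a₁*x + a₀) * Real.exp ((s*x)*y)| + |1| := abs_sub _ _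
      _ = Real.exp (a₂*x^2 + a₁*x + a₀) * Real.exp ((s*x)*y) + 1 := by
          rw [abs_one, abs_of_pos (by positivity)]
  calc (∫ y, ‖Faux C t a₂ a₁ s a₀ (x, y)‖ ∂ν)
      ≤ ∫ y, |C * (x - t)| *
          (Real.exp (a₂*x^2 + a₁*x + a₀) * Real.exp ((s*x)*y) + 1) ∂ν :=
        integral_mono (Faux_line_integrable hΔ x).norm hb hle
    _ = |C * (x - t)| * (Real.exp (a₂*x^2 + a₁*x + a₀) * Real.exp ((s*x)^2*Δ/2) + 1) := by
        rw [integral_const_mul,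
          integral_add ((gauss_integrable_exp_lin hΔ (s*x)).const_mul _) (integrable_const _),
          integral_const_mul, gauss_mgf hΔ]
        simp
    _ = |C * (x - t)| * (Real.exp ((a₂ + s^2*Δ/2)*x^2 + a₁*x + a₀) + 1) := by
        rw [← Real.exp_add]; ring_nf

lemma gauss_mean_sub (hv : 0 < v) :
    ∫ x, (x - t) ∂(gaussianReal t v.toNNReal) = 0 := by
  have h0 := (gauss_core (m := t) (v := v) (α := 0) (β := 0) hv (by norm_num)).2
  simpa using h0

lemma gauss_integrable_sub (hv : 0 < v) (c : ℝ) :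
    Integrable (fun x => x - c) (gaussianReal t v.toNNReal) := by
  have h0 := gauss_integrable_sub_mul_exp (m := t) (v := v) (α := 0) (β := 0) hv (by norm_num) c
  simpa using h0

lemma Faux_outer_integrable (hv : 0 < v) (hcond : 2*(a₂ + s^2*Δ/2)*v < 1) :
    Integrable (fun x => C * (x - t) * (Real.exp ((a₂ + s^2*Δ/2)*x^2 + a₁*x + a₀) - 1))
      (gaussianReal t v.toNNReal) := by
  have h1 := (gauss_integrable_sub_mul_exp (m := t) (v := v) (α := a₂ + s^2*Δ/2) (β := a₁)
    hv hcond t).const_mul (C * Real.exp a₀)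
  have h2 := (gauss_integrable_sub (t := t) hv t).const_mul C
  refine (h1.sub h2).congr (Filter.Eventually.of_forall fun x => ?_)
  have hsplit : Real.exp ((a₂ + s^2*Δ/2)*x^2 + a₁*x + a₀)
      = Real.exp ((a₂ + s^2*Δ/2)*x^2 + a₁*x) * Real.exp a₀ := by rw [← Real.exp_add]
  simp only [Pi.sub_apply]
  rw [hsplit]
  ring

lemma Faux_abs_outer_integrable (hv : 0 < v) (hcond : 2*(a₂ + s^2*Δ/2)*v < 1) :
    Integrable (fun x => |C * (x - t)| * (Real.exp ((a₂ + s^2*Δ/2)*x^2 + a₁*x + a₀) + 1))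
      (gaussianReal t v.toNNReal) := by
  have h1 := (gauss_integrable_sub_mul_exp (m := t) (v := v) (α := a₂ + s^2*Δ/2) (β := a₁)
    hv hcond t).const_mul (C * Real.exp a₀)
  have h2 := (gauss_integrable_sub (t := t) hv t).const_mul C
  refine (h1.add h2).abs.congr (Filter.Eventually.of_forall fun x => ?_)
  have hsplit : Real.exp ((a₂ + s^2*Δ/2)*x^2 + a₁*x + a₀)
      = Real.exp ((a₂ + s^2*Δ/2)*x^2 + a₁*x) * Real.exp a₀ := by rw [← Real.exp_add]
  have hx : C * Real.exp a₀ * ((x - t) * Real.exp ((a₂ + s^2*Δ/2)*x^2 + a₁*x)) + C * (x - t)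
      = (C * (x - t)) * (Real.exp ((a₂ + s^2*Δ/2)*x^2 + a₁*x + a₀) + 1) := by
    rw [hsplit]; ring
  simp only [Pi.add_apply]
  rw [hx, abs_mul, abs_of_pos (show (0:ℝ) < Real.exp ((a₂ + s^2*Δ/2)*x^2 + a₁*x + a₀) + 1
    by positivity)]

lemma Faux_integrable (hv : 0 < v) (hΔ : 0 < Δ) (hcond : 2*(a₂ + s^2*Δ/2)*v < 1) :
    Integrable (Faux C t a₂ a₁ s a₀)
      ((gaussianReal t v.toNNReal).prod (gaussianReal 0 Δ.toNNReal)) := by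
  have hsm : AEStronglyMeasurable (Faux C t a₂ a₁ s a₀)
      ((gaussianReal t v.toNNReal).prod (gaussianReal 0 Δ.toNNReal)) :=
    (Faux_continuous C t a₂ a₁ s a₀).aestronglyMeasurable
  rw [integrable_prod_iff hsm]
  refine ⟨Filter.Eventually.of_forall fun x => Faux_line_integrable hΔ x, ?_⟩
  refine Integrable.mono'
    (g := fun x => |C * (x - t)| * (Real.exp ((a₂ + s^2*Δ/2)*x^2 + a₁*x + a₀) + 1))
    (Faux_abs_outer_integrable hv hcond)
    (hsm.norm.integral_prod_right') (Filter.Eventually.of_forall fun x => ?_)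
  rw [Real.norm_eq_abs, abs_of_nonneg (integral_nonneg fun y => norm_nonneg _)]
  exact Faux_norm_inner_le hΔ x

lemma Faux_integral (hv : 0 < v) (hΔ : 0 < Δ) (hcond : 2*(a₂ + s^2*Δ/2)*v < 1) :
    ∫ p, Faux C t a₂ a₁ s a₀ p
        ∂((gaussianReal t v.toNNReal).prod (gaussianReal 0 Δ.toNNReal))
      = C * (v*(a₁+2*(a₂ + s^2*Δ/2)*t)/(1-2*(a₂ + s^2*Δ/2)*v))
        * (Real.sqrt (1-2*(a₂ + s^2*Δ/2)*v))⁻¹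
        * Real.exp ((a₂ + s^2*Δ/2)*t^2 + a₁*t + a₀
            + (a₁+2*(a₂ + s^2*Δ/2)*t)^2*v/(2*(1-2*(a₂ + s^2*Δ/2)*v))) := by
  set α' := a₂ + s^2*Δ/2 with hα'
  rw [integral_prod _ (Faux_integrable hv hΔ hcond)]
  calc ∫ x, (∫ y, Faux C t a₂ a₁ s a₀ (x, y) ∂(gaussianReal 0 Δ.toNNReal))
          ∂(gaussianReal t v.toNNReal)
      = ∫ x, (C * Real.exp a₀ * ((x - t) * Real.exp (α'*x^2 + a₁*x)) - C * (x - t))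
          ∂(gaussianReal t v.toNNReal) := by
        refine integral_congr_ae (Filter.Eventually.of_forall fun x => ?_)
        simp only []
        rw [Faux_inner hΔ x, ← hα',
          show α'*x^2 + a₁*x + a₀ = (α'*x^2 + a₁*x) + a₀ by ring, Real.exp_add]
        ring
    _ = C * Real.exp a₀ * (∫ x, (x - t) * Real.exp (α'*x^2 + a₁*x)
            ∂(gaussianReal t v.toNNReal))
          - C * ∫ x, (x - t) ∂(gaussianReal t v.toNNReal) := by
        rw [integral_sub ((gauss_integrable_sub_mul_exp hv hcond t).const_mul _)
          ((gauss_integrable_sub hv t).const_mul _), integral_const_mul, integral_const_mul]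
    _ = _ := by
        rw [gauss_mean_sub hv, (gauss_core (m := t) (v := v) (α := α') (β := a₁) hv hcond).2]
        have hE : Real.exp (α'*t^2 + a₁*t + (a₁+2*α'*t)^2*v/(2*(1-2*α'*v))) * Real.exp a₀
            = Real.exp (α'*t^2 + a₁*t + a₀ + (a₁+2*α'*t)^2*v/(2*(1-2*α'*v))) := by
          rw [← Real.exp_add]; congr 1; ring
        linear_combination (C * (v*(a₁+2*α'*t)/(1-2*α'*v)) * (Real.sqrt (1-2*α'*v))⁻¹) * hE
end Stmt13Aux

open Stmt13Aux

/-- The time-discretized policy-gradient learning signal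
`ê(ψ,θ) = Σ_k [γσ²(a_k − θ)/(λ(1−γ))]·(R_k^{1−γ} exp((−ψ + λ(1−γ)/2)Δt) − 1)`,
where `R_k = exp((r + (μ−r)a_k − σ²a_k²/2)Δt + σ a_k ΔB_k)` and `Δt = T/K`. -/
noncomputable def ehat (μ r σ γ lam T ψ θ : ℝ) (K : ℕ) {Ω : Type}
    (a ΔB : Fin K → Ω → ℝ) (ω : Ω) : ℝ :=
  ∑ k : Fin K, (γ * σ^2 * (a k ω - θ) / (lam * (1 - γ))) *
    ((Real.exp ((r + (μ - r) * a k ω - (1/2) * σ^2 * (a k ω)^2) * (T / (K : ℝ))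
        + σ * a k ω * ΔB k ω)) ^ (1 - γ)
      * Real.exp ((-ψ + lam * (1 - γ) / 2) * (T / (K : ℝ))) - 1)

/-- Exact closed-form mean of the discretized learning signal (proof of Proposition 1):
with `A₁ = (1−γ)(r + (μ−r)θ − (γ/2)σ²θ² + λ/2) − ψ`,
`A₂ = (1−γ)(μ − r − θγσ²)√(λ/(γσ²))` and `A₃ = (γ−1)λ`, if `1 − A₃Δt > 0` then
`E[ê(ψ,θ)] = T(μ − r − θγσ²) exp(A₁Δt + A₂²Δt²/(2(1 − A₃Δt))) (1 − A₃Δt)^{−3/2}`. -/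
theorem stmt13 (μ r σ γ lam T ψ θ : ℝ) (hσ : 0 < σ) (hγ : 0 < γ) (hγ1 : γ ≠ 1)
    (hlam : 0 < lam) (hT : 0 < T) (K : ℕ) (hK : 1 ≤ K)
    (Ω : Type) (_ : MeasureSpace Ω) (_ : IsProbabilityMeasure (ℙ : Measure Ω))
    (a ΔB : Fin K → Ω → ℝ)
    (hameas : ∀ k, Measurable (a k)) (hBmeas : ∀ k, Measurable (ΔB k))
    (halaw : ∀ k, Measure.map (a k) ℙ = gaussianReal θ (lam / (γ * σ^2)).toNNReal)
    (hBlaw : ∀ k, Measure.map (ΔB k) ℙ = gaussianReal 0 (T / (K : ℝ)).toNNReal)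
    (hindep : iIndepFun (Sum.elim a ΔB) ℙ)
    (A₁ A₂ A₃ : ℝ)
    (hA₁ : A₁ = (1 - γ) * (r + (μ - r) * θ - (γ / 2) * σ^2 * θ^2 + lam / 2) - ψ)
    (hA₂ : A₂ = (1 - γ) * (μ - r - θ * γ * σ^2) * Real.sqrt (lam / (γ * σ^2)))
    (hA₃ : A₃ = (γ - 1) * lam)
    (hpos : 0 < 1 - A₃ * (T / (K : ℝ))) :
    (∫ ω, ehat μ r σ γ lam T ψ θ K a ΔB ω)
      = T * (μ - r - θ * γ * σ^2)
        * Real.exp (A₁ * (T / (K : ℝ))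
            + A₂^2 * (T / (K : ℝ))^2 / (2 * (1 - A₃ * (T / (K : ℝ)))))
        * (1 - A₃ * (T / (K : ℝ))) ^ (-(3/2) : ℝ) := by
  have hPP : IsProbabilityMeasure (ℙ : Measure Ω) := ‹_›
  haveI := hPP
  have hγ1' : (1:ℝ) - γ ≠ 0 := sub_ne_zero.mpr (Ne.symm hγ1)
  have hγσ : γ * σ^2 ≠ 0 := by positivity
  have hKpos : (0:ℝ) < (K:ℝ) := by exact_mod_cast hK
  set Δ : ℝ := T / (K:ℝ) with hΔdef
  have hΔ : 0 < Δ := div_pos hT hKpos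
  set v0 : ℝ := lam / (γ * σ^2) with hv0def
  have hv0 : 0 < v0 := div_pos hlam (by positivity)
  set C : ℝ := γ * σ^2 / (lam * (1 - γ)) with hCdef
  set a₂ : ℝ := -(1/2) * σ^2 * Δ * (1 - γ) with ha₂
  set a₁ : ℝ := (μ - r) * Δ * (1 - γ) with ha₁
  set s : ℝ := σ * (1 - γ) with hs
  set a₀ : ℝ := r * Δ * (1 - γ) + (-ψ + lam * (1 - γ)/2) * Δ with ha₀
  have h2av : 2 * (a₂ + s^2*Δ/2) * v0 = A₃ * Δ := by
    rw [ha₂, hs, hv0def, hA₃]; field_simp; ring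
  have hcond : 2 * (a₂ + s^2*Δ/2) * v0 < 1 := by rw [h2av]; linarith
  have hterm : ∀ x y : ℝ,
      (γ * σ^2 * (x - θ) / (lam * (1 - γ))) *
        ((Real.exp ((r + (μ - r) * x - (1/2) * σ^2 * x^2) * Δ + σ * x * y)) ^ (1 - γ)
          * Real.exp ((-ψ + lam * (1 - γ) / 2) * Δ) - 1)
      = Faux C θ a₂ a₁ s a₀ (x, y) := by
    intro x y
    have harg : ((r + (μ - r) * x - (1/2) * σ^2 * x^2) * Δ + σ * x * y)*(1-γ)
        + (-ψ + lam*(1-γ)/2)*Δ = a₂*x^2 + a₁*x + s*x*y + a₀ := by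
      rw [ha₂, ha₁, hs, ha₀]; ring
    rw [← Real.exp_mul, ← Real.exp_add, harg]
    simp only [Faux]
    rw [hCdef]
    ring
  have hehat : ∀ ω, ehat μ r σ γ lam T ψ θ K a ΔB ω
      = ∑ k : Fin K, Faux C θ a₂ a₁ s a₀ (a k ω, ΔB k ω) := by
    intro ω
    simp only [ehat, ← hΔdef]
    exact Finset.sum_congr rfl fun k _ => hterm (a k ω) (ΔB k ω)
  have hpairmeas : ∀ k : Fin K, AEMeasurable (fun ω => (a k ω, ΔB k ω)) ℙ :=
    fun k => ((hameas k).prodMk (hBmeas k)).aemeasurable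
  have hmap : ∀ k : Fin K, Measure.map (fun ω => (a k ω, ΔB k ω)) ℙ
      = (gaussianReal θ v0.toNNReal).prod (gaussianReal 0 Δ.toNNReal) := by
    intro k
    have hij : (Sum.inl k : Fin K ⊕ Fin K) ≠ Sum.inr k := by simp
    have hIF : IndepFun (a k) (ΔB k) ℙ := by
      have h := hindep.indepFun hij
      simpa using h
    have h := (ProbabilityTheory.indepFun_iff_map_prod_eq_prod_map_map
      (hameas k).aemeasurable (hBmeas k).aemeasurable).mp hIF
    rw [h, halaw k, hBlaw k]
  have hFcont := Faux_continuous C θ a₂ a₁ s a₀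
  have hint : ∀ k : Fin K, Integrable (fun ω => Faux C θ a₂ a₁ s a₀ (a k ω, ΔB k ω)) ℙ := by
    intro k
    have h := Faux_integrable (C := C) (t := θ) (a₂ := a₂) (a₁ := a₁) (s := s) (a₀ := a₀)
      hv0 hΔ hcond
    rw [← hmap k] at h
    simpa [Function.comp_def] using
      (integrable_map_measure hFcont.aestronglyMeasurable (hpairmeas k)).mp h
  have hval : ∀ k : Fin K, ∫ ω, Faux C θ a₂ a₁ s a₀ (a k ω, ΔB k ω) ∂ℙ
      = C * (v0*(a₁+2*(a₂ + s^2*Δ/2)*θ)/(1-2*(a₂ + s^2*Δ/2)*v0))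
        * (Real.sqrt (1-2*(a₂ + s^2*Δ/2)*v0))⁻¹
        * Real.exp ((a₂ + s^2*Δ/2)*θ^2 + a₁*θ + a₀
            + (a₁+2*(a₂ + s^2*Δ/2)*θ)^2*v0/(2*(1-2*(a₂ + s^2*Δ/2)*v0))) := by
    intro k
    calc ∫ ω, Faux C θ a₂ a₁ s a₀ (a k ω, ΔB k ω) ∂ℙ
        = ∫ p, Faux C θ a₂ a₁ s a₀ p ∂(Measure.map (fun ω => (a k ω, ΔB k ω)) ℙ) :=
          (integral_map (hpairmeas k) hFcont.aestronglyMeasurable).symm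
      _ = _ := by rw [hmap k]; exact Faux_integral hv0 hΔ hcond
  have h1m : 1 - 2*(a₂ + s^2*Δ/2)*v0 = 1 - A₃*Δ := by rw [h2av]
  have hA₂sq : A₂^2 = (1-γ)^2 * (μ - r - θ*γ*σ^2)^2 * v0 := by
    rw [hA₂, hv0def, mul_pow, mul_pow, Real.sq_sqrt (le_of_lt (div_pos hlam (by positivity)))]
  have hfrac : (a₁+2*(a₂ + s^2*Δ/2)*θ)^2*v0 = A₂^2*Δ^2 := by
    rw [hA₂sq, ha₁, ha₂, hs]; ring
  have hpoly : (a₂ + s^2*Δ/2)*θ^2 + a₁*θ + a₀ = A₁*Δ := by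
    rw [hA₁, ha₁, ha₂, hs, ha₀]; ring
  have hnum : (K:ℝ) * C * v0 * (a₁ + 2*(a₂ + s^2*Δ/2)*θ) = T * (μ - r - θ*γ*σ^2) := by
    rw [hCdef, hv0def, ha₁, ha₂, hs, hΔdef]
    field_simp
    ring
  have hrpow : (1 - A₃*Δ) ^ (-(3/2) : ℝ) = (1 - A₃*Δ)⁻¹ * (Real.sqrt (1 - A₃*Δ))⁻¹ := by
    rw [show (-(3/2) : ℝ) = (-1) + (-(1/2)) by norm_num, Real.rpow_add hpos,
      Real.rpow_neg_one, Real.rpow_neg hpos.le, Real.sqrt_eq_rpow]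
  calc (∫ ω, ehat μ r σ γ lam T ψ θ K a ΔB ω)
      = ∫ ω, ∑ k : Fin K, Faux C θ a₂ a₁ s a₀ (a k ω, ΔB k ω) :=
        integral_congr_ae (Filter.Eventually.of_forall hehat)
    _ = ∑ k : Fin K, ∫ ω, Faux C θ a₂ a₁ s a₀ (a k ω, ΔB k ω) ∂ℙ :=
        integral_finset_sum Finset.univ (fun k _ => hint k)
    _ = (K:ℝ) * (C * (v0*(a₁+2*(a₂ + s^2*Δ/2)*θ)/(1-2*(a₂ + s^2*Δ/2)*v0))
        * (Real.sqrt (1-2*(a₂ + s^2*Δ/2)*v0))⁻¹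
        * Real.exp ((a₂ + s^2*Δ/2)*θ^2 + a₁*θ + a₀
            + (a₁+2*(a₂ + s^2*Δ/2)*θ)^2*v0/(2*(1-2*(a₂ + s^2*Δ/2)*v0)))) := by
        rw [Finset.sum_congr rfl (fun k _ => hval k), Finset.sum_const, Finset.card_univ,
          Fintype.card_fin, nsmul_eq_mul]
    _ = T * (μ - r - θ * γ * σ^2)
        * Real.exp (A₁ * Δ + A₂^2 * Δ^2 / (2 * (1 - A₃ * Δ)))
        * (1 - A₃ * Δ) ^ (-(3/2) : ℝ) := by
        rw [h1m, hrpow,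
          show (a₂ + s^2*Δ/2)*θ^2 + a₁*θ + a₀ + (a₁+2*(a₂ + s^2*Δ/2)*θ)^2*v0/(2*(1-A₃*Δ))
            = A₁*Δ + A₂^2*Δ^2/(2*(1-A₃*Δ)) by rw [hfrac, hpoly]]
        linear_combination ((1 - A₃*Δ)⁻¹ * (Real.sqrt (1 - A₃*Δ))⁻¹
          * Real.exp (A₁*Δ + A₂^2*Δ^2/(2*(1-A₃*Δ)))) * hnum
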